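/- Let V be a countable-dimensional complex vector space with a nondegenerate symmetric or skew-symmetric bilinear form β, and let F be a β-isotropic generalized flag. If a β-isotropic generalized flag G compatible with a β-isotropic basis L via a surjection σ: L → A has the property that the orthogonality involution i_G(F) = F^⊥ induces the involution i_A on A, then σ ∘ i_L = i_A ∘ σ, where i_L is the involution of L defining its β-isotropy. -/

import Mathlib

open Submodule

variable {V : Type*} [AddCommGroup V] [Module ℂ V]

/-- `F''` is the immediate successor of `F'` in the chain `𝓕`. -/
def ConsecPair (𝓕 : Set (Submodule ℂ V)) (F' F'' : Submodule ℂ V) : Prop :=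
  F' ∈ 𝓕 ∧ F'' ∈ 𝓕 ∧ F' < F'' ∧ ∀ G ∈ 𝓕, ¬ (F' < G ∧ G < F'')

/-- A generalized flag. -/
structure IsGenFlag (𝓕 : Set (Submodule ℂ V)) : Prop where
  chain : IsChain (· ≤ ·) 𝓕
  predsucc : ∀ F ∈ 𝓕, (∃ G, ConsecPair 𝓕 G F) ∨ (∃ G, ConsecPair 𝓕 F G)
  cover : ∀ v : V, v ≠ 0 → ∃ F' F'', ConsecPair 𝓕 F' F'' ∧ v ∈ F'' ∧ v ∉ F'

/-- If a `β`-isotropic generalized flag `𝓖` is compatible with a `β`-isotropic basis `L`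
via the surjection `σ : L → A` and the orthogonality involution of `𝓖` induces the
involution `i_A` on the index set `A` of consecutive pairs, then `σ ∘ i_L = i_A ∘ σ`. -/

private lemma consec_unique {V : Type*} [AddCommGroup V] [Module ℂ V]
    {𝓖 : Set (Submodule ℂ V)} (hc : IsChain (· ≤ ·) 𝓖)
    {p q : Submodule ℂ V × Submodule ℂ V}
    (hp : ConsecPair 𝓖 p.1 p.2) (hq : ConsecPair 𝓖 q.1 q.2)
    {v : V} (h1 : v ∈ p.2) (h2 : v ∉ p.1) (h3 : v ∈ q.2) (h4 : v ∉ q.1) : p = q := by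
  obtain ⟨hp1, hp2, hplt, hpmax⟩ := hp
  obtain ⟨hq1, hq2, hqlt, hqmax⟩ := hq
  have hq1p2 : q.1 < p.2 := by
    rcases hc.total hq1 hp2 with h | h
    · exact lt_of_le_of_ne h (fun e => h4 (e ▸ h1))
    · exact absurd (h h1) h4
  have hp1q2 : p.1 < q.2 := by
    rcases hc.total hp1 hq2 with h | h
    · exact lt_of_le_of_ne h (fun e => h2 (e ▸ h3))
    · exact absurd (h h3) h2
  have h22 : p.2 = q.2 := by
    rcases hc.total hp2 hq2 with h | h
    · rcases h.lt_or_eq with h' | h'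
      · exact absurd ⟨hq1p2, h'⟩ (hqmax p.2 hp2)
      · exact h'
    · rcases h.lt_or_eq with h' | h'
      · exact absurd ⟨hp1q2, h'⟩ (hpmax q.2 hq2)
      · exact h'.symm
  have h11 : p.1 = q.1 := by
    rcases hc.total hp1 hq1 with h | h
    · rcases h.lt_or_eq with h' | h'
      · exact absurd ⟨h', h22 ▸ hq1p2⟩ (hpmax q.1 hq1)
      · exact h'
    · rcases h.lt_or_eq with h' | h'
      · exact absurd ⟨h', h22.symm ▸ hp1q2⟩ (hqmax p.1 hp1)
      · exact h'.symm
  exact Prod.ext h11 h22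

theorem sigma_comm_involution
    (hV : Module.rank ℂ V = Cardinal.aleph0)
    (β : LinearMap.BilinForm ℂ V) (hβnd : β.Nondegenerate)
    (hβsym : β.IsSymm ∨ β.IsAlt)
    (ι : Type*) (L : Module.Basis ι ℂ V)
    (iL : ι → ι) (hiL : Function.Involutive iL)
    (hiLfix : {i | iL i = i}.Subsingleton)
    (hLiso : ∀ i j : ι, j ≠ iL i → β (L i) (L j) = 0)
    (𝓖 : Set (Submodule ℂ V)) (h𝓖 : IsGenFlag 𝓖)
    (hiso : ∀ F ∈ 𝓖, β.orthogonal F ∈ 𝓖)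
    (hanti : ∀ F ∈ 𝓖, ∀ H ∈ 𝓖, F ≤ H → β.orthogonal H ≤ β.orthogonal F)
    (hinv : ∀ F ∈ 𝓖, β.orthogonal (β.orthogonal F) = F)
    (σ : ι → {p : Submodule ℂ V × Submodule ℂ V // ConsecPair 𝓖 p.1 p.2})
    (hσ : Function.Surjective σ)
    (hcompat : ∀ p : {p : Submodule ℂ V × Submodule ℂ V // ConsecPair 𝓖 p.1 p.2},
      p.val.1 = Submodule.span ℂ ((⇑L) '' {i | (σ i).val.2 ≤ p.val.1}) ∧
      p.val.2 = Submodule.span ℂ ((⇑L) '' {i | (σ i).val.2 ≤ p.val.2}))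
    (iA : {p : Submodule ℂ V × Submodule ℂ V // ConsecPair 𝓖 p.1 p.2} →
          {p : Submodule ℂ V × Submodule ℂ V // ConsecPair 𝓖 p.1 p.2})
    (hiA : ∀ p, ((iA p).val.1 = β.orthogonal p.val.2) ∧ ((iA p).val.2 = β.orthogonal p.val.1)) :
    σ ∘ iL = iA ∘ σ := by
  -- `β (L i) (L (iL i)) ≠ 0` for every `i`
  have hnz : ∀ i : ι, β (L i) (L (iL i)) ≠ 0 := by
    intro i h0
    have hzero : ∀ j, β (L i) (L j) = 0 := by
      intro j
      by_cases hj : j = iL i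
      · rw [hj]; exact h0
      · exact hLiso i j hj
    have : β (L i) = 0 := L.ext (fun j => by simpa using hzero j)
    exact L.ne_zero i (hβnd.1 (L i) (fun n => by rw [this]; rfl))
  -- `L k ∈ (σ k).2` and `L k ∉ (σ k).1`
  have hmem2 : ∀ k : ι, L k ∈ (σ k).val.2 := by
    intro k
    rw [(hcompat (σ k)).2]
    exact Submodule.subset_span ⟨k, show (σ k).val.2 ≤ (σ k).val.2 from le_rfl, rfl⟩
  have hmem1 : ∀ k : ι, L k ∉ (σ k).val.1 := by
    intro k hk
    rw [(hcompat (σ k)).1] at hk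
    have hknot : k ∉ {j | (σ j).val.2 ≤ (σ k).val.1} := by
      intro hle
      exact absurd ((σ k).prop.2.2.1.trans_le hle) (lt_irrefl _)
    exact L.linearIndependent.notMem_span_image hknot hk
  funext i
  simp only [Function.comp_apply]
  -- show `L (iL i) ∈ (iA (σ i)).2` and `L (iL i) ∉ (iA (σ i)).1`
  have hiAmem2 : L (iL i) ∈ (iA (σ i)).val.2 := by
    rw [(hiA (σ i)).2, LinearMap.BilinForm.mem_orthogonal_iff]
    intro n hn
    rw [(hcompat (σ i)).1] at hn
    induction hn using Submodule.span_induction with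
    | mem x hx =>
      obtain ⟨j, hj, rfl⟩ := hx
      have hji : iL i ≠ iL j := by
        intro e
        have : i = j := hiL.injective (by rw [e])
        subst this
        exact absurd ((σ i).prop.2.2.1.trans_le hj) (lt_irrefl _)
      exact hLiso j (iL i) hji
    | zero => simp [LinearMap.BilinForm.IsOrtho]
    | add x y _ _ hx hy => simp [LinearMap.BilinForm.IsOrtho, LinearMap.add_apply] at hx hy ⊢; simp [hx, hy]
    | smul c x _ hx => simp [LinearMap.BilinForm.IsOrtho] at hx ⊢; simp [hx]
  have hiAmem1 : L (iL i) ∉ (iA (σ i)).val.1 := by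
    rw [(hiA (σ i)).1, LinearMap.BilinForm.mem_orthogonal_iff]
    intro h
    exact hnz i (h (L i) (hmem2 i))
  have := consec_unique h𝓖.chain (σ (iL i)).prop (iA (σ i)).prop
    (hmem2 (iL i)) (hmem1 (iL i)) hiAmem2 hiAmem1
  exact Subtype.ext this
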